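/- Every descending Gauss code can be transformed into the empty code by a finite sequence of C1 and W moves; in particular, every descending Gauss code represents the trivial welded knot. -/

import Mathlib

/-!
Gauss codes for welded knots.

A Gauss code is a cyclic word in which each chord label occurs exactly twice,
once as a tail (`isHead = false`) and once as a head (`isHead = true`), both
occurrences carrying the common sign of the chord.  We represent the cyclic
word by a linear list of entries, working up to rotation (`List.rotate`) and
injective relabelling of the chords.
-/

/-- An endpoint of a chord: `(chord label, isHead, sign)`, where `isHead = false`
means a tail (over-passing) endpoint and `isHead = true` a head (under-passing)
endpoint, and the sign `true`/`false` stands for `+1`/`-1`. -/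
abbrev GEntry : Type := ℕ × Bool × Bool

/-- A (linear representative of a cyclic) word of endpoints. -/
abbrev GWord : Type := List GEntry

/-- The set of chord labels occurring in a word. -/
def chordSet (w : GWord) : Set ℕ := {a | ∃ e ∈ w, e.1 = a}

/-- `w` is a Gauss code: every chord label that occurs in `w` occurs exactly
twice, once as a tail and once as a head, with a common sign. -/
def IsGaussCode (w : GWord) : Prop :=
  ∀ a ∈ chordSet w,
    w.countP (fun e => e.1 == a) = 2 ∧
    ∃ s : Bool, (a, false, s) ∈ w ∧ (a, true, s) ∈ w

/-- The crossing change at the set `S` of chords: at every chord of `S`, the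
tail and head markings of its two occurrences are exchanged and its sign is
reversed. -/
def crossingChange (S : Finset ℕ) (w : GWord) : GWord :=
  w.map fun e => if e.1 ∈ S then (e.1, !e.2.1, !e.2.2) else e

/-- Deletion of the chord `a` (both of its endpoints) from the word. -/
def deleteChord (a : ℕ) (w : GWord) : GWord :=
  w.filter fun e => e.1 != a

/-- Equality of words up to cyclic permutation. -/
def RotEq (w w' : GWord) : Prop := ∃ n : ℕ, w' = w.rotate n

/-- Renaming the chords of a word by `f`. -/
def relabelWord (f : ℕ → ℕ) (w : GWord) : GWord := w.map fun e => (f e.1, e.2)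

/-- Equality of words up to cyclic permutation and (injective) renaming of
the chords. -/
def CyclicRename (w w' : GWord) : Prop :=
  ∃ (n : ℕ) (f : ℕ → ℕ), Function.Injective f ∧ w' = relabelWord f (w.rotate n)

/-- Raw C1 move (deleting direction): deletion of a chord whose two endpoints
occupy adjacent positions; the inserting direction is the converse relation. -/
def C1delRaw (u v : GWord) : Prop :=
  ∃ (x y : GWord) (a : ℕ) (h s : Bool),
    (∀ e ∈ x ++ y, e.1 ≠ a) ∧
    u = x ++ (a, h, s) :: (a, !h, s) :: y ∧
    v = x ++ y

/-- Raw W move: interchange of two adjacent endpoints that are both tails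
(of any two chords, regardless of signs). -/
def WRaw (u v : GWord) : Prop :=
  ∃ (x y : GWord) (a b : ℕ) (s t : Bool),
    u = x ++ (a, false, s) :: (b, false, t) :: y ∧
    v = x ++ (b, false, t) :: (a, false, s) :: y

/-- Raw C2 move (deleting direction): deletion of a pair of chords of opposite
signs whose two tails occupy adjacent positions and whose two heads occupy
adjacent positions. -/
def C2delRaw (u v : GWord) : Prop :=
  ∃ (x y z : GWord) (a b : ℕ) (s : Bool),
    a ≠ b ∧
    (∀ e ∈ x ++ y ++ z, e.1 ≠ a ∧ e.1 ≠ b) ∧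
    (u = x ++ (a, false, s) :: (b, false, !s) :: (y ++ (a, true, s) :: (b, true, !s) :: z) ∨
     u = x ++ (a, false, s) :: (b, false, !s) :: (y ++ (b, true, !s) :: (a, true, s) :: z)) ∧
    v = x ++ y ++ z

/-- Raw C3 move: the Gauss-code translation of the planar Reidemeister move of
type 3.  Three strands `A`, `B`, `C` (modelled on the lines `y = -1`, `y = x`,
`y = -x` and their directions `(1,0)`, `(1,1)`, `(-1,1)`, possibly reversed
according to `dA`, `dB`, `dC`) meet pairwise in the chords `a = AB`, `b = AC`,
`c = BC`; `oAB`, `oAC`, `oBC` record which strand passes over in each pair and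
must come from a linear height order.  The six endpoints form three adjacent
pairs, one on each strand, and the move exchanges the order within each pair;
the head/tail pattern is determined by the heights and the signs by the heights
and the directions, as in a planar diagram. -/
def C3Raw (u v : GWord) : Prop :=
  ∃ (x y z t : GWord) (a b c : ℕ) (oAB oAC oBC dA dB dC swap : Bool),
    a ≠ b ∧ a ≠ c ∧ b ≠ c ∧
    (oAB = oBC → oAC = oAB) ∧
    (let sa : Bool := (dA == dB) == oAB
     let sb : Bool := (dA == dC) == oAC
     let sc : Bool := (dB == dC) == oBC
     let PA : GWord :=
       if dA then [(a, !oAB, sa), (b, !oAC, sb)] else [(b, !oAC, sb), (a, !oAB, sa)]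
     let PB : GWord :=
       if dB then [(a, oAB, sa), (c, !oBC, sc)] else [(c, !oBC, sc), (a, oAB, sa)]
     let PC : GWord :=
       if dC then [(b, oAC, sb), (c, oBC, sc)] else [(c, oBC, sc), (b, oAC, sb)]
     let Q1 : GWord := if swap then PC else PB
     let Q2 : GWord := if swap then PB else PC
     u = x ++ PA ++ y ++ Q1 ++ z ++ Q2 ++ t ∧
     v = x ++ PA.reverse ++ y ++ Q1.reverse ++ z ++ Q2.reverse ++ t)

/-- One welded Reidemeister move (C1, C2, C3 or W, in either direction),
performed up to cyclic permutation and renaming of chords. -/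
def WeldedStep (u v : GWord) : Prop :=
  ∃ u₀ v₀ : GWord, CyclicRename u u₀ ∧ CyclicRename v₀ v ∧
    (C1delRaw u₀ v₀ ∨ C1delRaw v₀ u₀ ∨ C2delRaw u₀ v₀ ∨ C2delRaw v₀ u₀ ∨
     C3Raw u₀ v₀ ∨ C3Raw v₀ u₀ ∨ WRaw u₀ v₀)

/-- Welded equivalence: two Gauss codes are welded-equivalent if they are
related by a finite sequence of C1, C2, C3 and W moves (on cyclic words). -/
def WeldedEquiv : GWord → GWord → Prop := Relation.EqvGen WeldedStep

/-- A Gauss code represents the trivial welded knot iff it is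
welded-equivalent to the empty code. -/
def RepresentsTrivial (w : GWord) : Prop := WeldedEquiv w []

/-- One C1 or W move (in either direction), up to cyclic permutation and
renaming of chords. -/
def CWStep (u v : GWord) : Prop :=
  ∃ u₀ v₀ : GWord, CyclicRename u u₀ ∧ CyclicRename v₀ v ∧
    (C1delRaw u₀ v₀ ∨ C1delRaw v₀ u₀ ∨ WRaw u₀ v₀)

/-- Relatedness by a finite sequence of C1 and W moves alone. -/
def CWEquiv : GWord → GWord → Prop := Relation.EqvGen CWStep

/-- One W move, up to cyclic permutation. -/
def WStepRot (u v : GWord) : Prop :=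
  ∃ u₀ v₀ : GWord, RotEq u u₀ ∧ RotEq v₀ v ∧ WRaw u₀ v₀

/-- One deleting C1 move, up to cyclic permutation. -/
def C1StepRot (u v : GWord) : Prop :=
  ∃ u₀ v₀ : GWord, RotEq u u₀ ∧ RotEq v₀ v ∧ C1delRaw u₀ v₀

/-- In the linear word `v`, no chord has its head occurring strictly before
its tail. -/
def TailsFirst (v : GWord) : Prop :=
  ¬ ∃ (x y z : GWord) (a : ℕ) (s s' : Bool),
      v = x ++ (a, true, s) :: (y ++ (a, false, s') :: z)

/-- A Gauss code is descending if the cyclic word can be cut at some point and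
read in one of the two directions so that every chord's tail occurs before its
head. -/
def IsDescending (w : GWord) : Prop :=
  ∃ n : ℕ, TailsFirst (w.rotate n) ∨ TailsFirst ((w.rotate n).reverse)

/-- `c(D)`: the minimal number of chords of a Gauss code representing the same
welded knot as `D`. -/
noncomputable def minCrossing (D : GWord) : ℕ :=
  sInf {n : ℕ | ∃ D' : GWord, IsGaussCode D' ∧ WeldedEquiv D D' ∧ (chordSet D').ncard = n}

/-- `u(D)`: the minimal cardinality of a set `S` of chords of `D` such that the
crossing change at `S` turns `D` into a Gauss code representing the trivial
welded knot. -/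
noncomputable def unknottingNumWord (D : GWord) : ℕ :=
  sInf {k : ℕ | ∃ S : Finset ℕ, ↑S ⊆ chordSet D ∧ S.card = k ∧
    WeldedEquiv (crossingChange S D) []}

/-- `u(K)`: the minimum of `u(D')` over all Gauss codes `D'` representing the
same welded knot as `D`. -/
noncomputable def unknottingNum (D : GWord) : ℕ :=
  sInf {k : ℕ | ∃ D' : GWord, IsGaussCode D' ∧ WeldedEquiv D D' ∧ unknottingNumWord D' = k}
section DescendingAux

open Relation List

/-- No chord has head before tail (sublist form). -/
def TFs (v : GWord) : Prop :=
  ∀ (a : ℕ) (s s' : Bool), ¬ ([(a, true, s), (a, false, s')] <+ v)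

/-- No chord has tail before head (sublist form). -/
def HFs (v : GWord) : Prop :=
  ∀ (a : ℕ) (s s' : Bool), ¬ ([(a, false, s), (a, true, s')] <+ v)

lemma pair_sublist_of_decomp {v x y z : GWord} {e1 e2 : GEntry}
    (h : v = x ++ e1 :: (y ++ e2 :: z)) : [e1, e2] <+ v := by
  subst h
  refine List.Sublist.trans ?_ (List.sublist_append_right x _)
  exact List.Sublist.cons₂ e1
    (List.Sublist.trans (List.Sublist.cons₂ e2 (List.nil_sublist z))
      (List.sublist_append_right y _))

lemma decomp_of_pair_sublist : ∀ {v : GWord} {e1 e2 : GEntry},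
    [e1, e2] <+ v → ∃ x y z, v = x ++ e1 :: (y ++ e2 :: z) := by
  intro v
  induction v with
  | nil => intro e1 e2 h; simp at h
  | cons e v ih =>
    intro e1 e2 h
    cases h with
    | cons _ h =>
      obtain ⟨x, y, z, rfl⟩ := ih h
      exact ⟨e :: x, y, z, rfl⟩
    | cons_cons _ h =>
      have he2 : e2 ∈ v := List.singleton_sublist.mp h
      obtain ⟨y, z, rfl⟩ := List.append_of_mem he2
      exact ⟨[], y, z, rfl⟩

lemma TFs_of_tailsFirst {v : GWord} (h : TailsFirst v) : TFs v := by
  intro a s s' hsub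
  obtain ⟨x, y, z, rfl⟩ := decomp_of_pair_sublist hsub
  exact h ⟨x, y, z, a, s, s', rfl⟩

lemma HFs_of_rev {v : GWord} (h : TailsFirst v.reverse) : HFs v := by
  intro a s s' hsub
  have h2 : [((a : ℕ), true, s'), ((a : ℕ), false, s)] <+ v.reverse := by
    simpa using hsub.reverse
  obtain ⟨x, y, z, hd⟩ := decomp_of_pair_sublist h2
  exact h ⟨x, y, z, a, s', s, hd⟩

lemma TFs.mono {u v : GWord} (h : TFs v) (hs : u <+ v) : TFs u :=
  fun a s s' hp => h a s s' (hp.trans hs)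

lemma HFs.mono {u v : GWord} (h : HFs v) (hs : u <+ v) : HFs u :=
  fun a s s' hp => h a s s' (hp.trans hs)

lemma del_sublist (x y z : GWord) (e1 e2 : GEntry) :
    x ++ y ++ z <+ x ++ e1 :: (y ++ e2 :: z) := by
  rw [List.append_assoc]
  exact List.Sublist.append (List.Sublist.refl x)
    (List.Sublist.cons e1
      (List.Sublist.append (List.Sublist.refl y)
        (List.Sublist.cons e2 (List.Sublist.refl z))))

lemma no_other {v : GWord} (hG : IsGaussCode v) {x y z : GWord} {a : ℕ}
    {e1 e2 : GEntry} (hv : v = x ++ e1 :: (y ++ e2 :: z))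
    (h1 : e1.1 = a) (h2 : e2.1 = a) :
    ∀ e ∈ x ++ y ++ z, e.1 ≠ a := by
  have ha : a ∈ chordSet v := ⟨e1, by subst hv; simp, h1⟩
  obtain ⟨hc, -⟩ := hG a ha
  subst hv
  rw [List.countP_append, List.countP_cons, List.countP_append, List.countP_cons] at hc
  simp only [h1, h2, beq_self_eq_true, if_pos] at hc
  intro e he hea
  have hp : (fun e : GEntry => e.1 == a) e = true := by simp [hea]
  have hx : x.countP (fun e : GEntry => e.1 == a) = 0 := by omega
  have hy : y.countP (fun e : GEntry => e.1 == a) = 0 := by omega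
  have hz : z.countP (fun e : GEntry => e.1 == a) = 0 := by omega
  rcases List.mem_append.mp he with he' | he'
  · rcases List.mem_append.mp he' with h | h
    · exact absurd hp (by simpa using List.countP_eq_zero.mp hx e h)
    · exact absurd hp (by simpa using List.countP_eq_zero.mp hy e h)
  · exact absurd hp (by simpa using List.countP_eq_zero.mp hz e he')

lemma mem_tail_of_mem_head {v : GWord} (hG : IsGaussCode v) {a : ℕ} {s : Bool}
    (h : ((a : ℕ), true, s) ∈ v) : ((a : ℕ), false, s) ∈ v := by
  have ha : a ∈ chordSet v := ⟨_, h, rfl⟩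
  obtain ⟨hc, s₀, ht, hh⟩ := hG a ha
  by_cases hs : s₀ = s
  · exact hs ▸ ht
  · exfalso
    have hlen : (v.filter (fun e : GEntry => e.1 == a)).length = 2 := by
      rw [← List.countP_eq_length_filter]; exact hc
    have h1 : ((a : ℕ), false, s₀) ∈ v.filter (fun e : GEntry => e.1 == a) :=
      List.mem_filter.mpr ⟨ht, by simp⟩
    have h2 : ((a : ℕ), true, s₀) ∈ v.filter (fun e : GEntry => e.1 == a) :=
      List.mem_filter.mpr ⟨hh, by simp⟩
    have h3 : ((a : ℕ), true, s) ∈ v.filter (fun e : GEntry => e.1 == a) :=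
      List.mem_filter.mpr ⟨h, by simp⟩
    obtain ⟨u, w, huw⟩ := List.length_eq_two.mp hlen
    rw [huw] at h1 h2 h3
    simp only [List.mem_cons, List.not_mem_nil, or_false, List.mem_singleton] at h1 h2 h3
    rcases h1 with h1 | h1 <;> rcases h2 with h2 | h2 <;> rcases h3 with h3 | h3 <;>
        (try subst h1) <;> (try subst h2) <;> (try subst h3) <;> simp_all

lemma mem_del {x y z : GWord} {a : ℕ} {e1 e2 : GEntry}
    (h1 : e1.1 = a) (h2 : e2.1 = a) {e : GEntry} (hne : e.1 ≠ a)
    (he : e ∈ x ++ e1 :: (y ++ e2 :: z)) : e ∈ x ++ y ++ z := by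
  simp only [List.mem_append, List.mem_cons] at he ⊢
  rcases he with h | h | h | h | h
  · tauto
  · exact absurd (h ▸ h1) hne
  · tauto
  · exact absurd (h ▸ h2) hne
  · tauto

lemma delete_gauss {v : GWord} (hG : IsGaussCode v) {x y z : GWord} {a : ℕ}
    {e1 e2 : GEntry} (hv : v = x ++ e1 :: (y ++ e2 :: z))
    (h1 : e1.1 = a) (h2 : e2.1 = a) :
    IsGaussCode (x ++ y ++ z) := by
  have hno := no_other hG hv h1 h2
  intro b hb
  obtain ⟨e, he, rfl⟩ := hb
  have hba : e.1 ≠ a := hno e he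
  have hbv : e.1 ∈ chordSet v := by
    refine ⟨e, ?_, rfl⟩
    subst hv
    have := del_sublist x y z e1 e2
    exact this.mem he
  obtain ⟨hc, s, ht, hh⟩ := hG e.1 hbv
  have hae : ¬ (a = e.1) := fun h => hba h.symm
  have hpe1 : (e1.1 == e.1) = false := by simp [h1, hae]
  have hpe2 : (e2.1 == e.1) = false := by simp [h2, hae]
  refine ⟨?_, s, ?_, ?_⟩
  · subst hv
    rw [List.countP_append, List.countP_cons, List.countP_append, List.countP_cons] at hc
    rw [List.countP_append, List.countP_append]
    simp only [hpe1, hpe2, Bool.false_eq_true, if_false] at hc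
    omega
  · exact mem_del h1 h2 hba (hv ▸ ht)
  · exact mem_del h1 h2 hba (hv ▸ hh)

lemma gauss_perm {v w : GWord} (h : v.Perm w) (hG : IsGaussCode v) :
    IsGaussCode w := by
  intro a ha
  obtain ⟨e, he, rfl⟩ := ha
  obtain ⟨hc, s, ht, hh⟩ := hG e.1 ⟨e, h.mem_iff.mpr he, rfl⟩
  exact ⟨by rw [← h.countP_eq]; exact hc, s, h.mem_iff.mp ht, h.mem_iff.mp hh⟩

lemma crn_refl (w : GWord) : CyclicRename w w :=
  ⟨0, id, fun _ _ h => h, by simp [relabelWord]⟩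

lemma wstep {u v : GWord} (h : WRaw u v) : CWStep u v :=
  ⟨u, v, crn_refl u, crn_refl v, Or.inr (Or.inr h)⟩

lemma c1step {u v : GWord} (h : C1delRaw u v) : CWStep u v :=
  ⟨u, v, crn_refl u, crn_refl v, Or.inl h⟩

lemma first_head : ∀ (v : GWord), (∃ e ∈ v, e.2.1 = true) →
    ∃ (X : GWord) (a : ℕ) (s : Bool) (Y : GWord),
      v = X ++ (a, true, s) :: Y ∧ ∀ e ∈ X, e.2.1 = false := by
  intro v
  induction v with
  | nil => rintro ⟨e, he, -⟩; simp at he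
  | cons e v ih =>
    obtain ⟨a, b, s⟩ := e
    intro hex
    by_cases hb : b = true
    · subst hb
      exact ⟨[], a, s, v, rfl, by simp⟩
    · have hb' : b = false := Bool.eq_false_iff.mpr hb
      obtain ⟨e', he', hp⟩ := hex
      have he'v : e' ∈ v := by
        rcases List.mem_cons.mp he' with h | h
        · exfalso; rw [h] at hp; exact hb hp
        · exact h
      obtain ⟨X, a', s', Y, hdec, hX⟩ := ih ⟨e', he'v, hp⟩
      refine ⟨(a, b, s) :: X, a', s', Y, by rw [hdec]; rfl, ?_⟩
      intro e h
      rcases List.mem_cons.mp h with h | h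
      · rw [h]; exact hb'
      · exact hX e h

lemma swap_chain (m : GWord) : ∀ (x y : GWord) (a : ℕ) (s : Bool),
    (∀ e ∈ m, e.2.1 = false) →
    Relation.ReflTransGen WRaw (x ++ (a, false, s) :: (m ++ y))
      (x ++ m ++ (a, false, s) :: y) := by
  induction m with
  | nil => intro x y a s _; simpa using Relation.ReflTransGen.refl
  | cons e m ih =>
    intro x y a s h
    obtain ⟨b, tb, t⟩ := e
    have htb : tb = false := h (b, tb, t) (by simp)
    subst htb
    have step : WRaw (x ++ (a, false, s) :: ((b, false, t) :: m ++ y))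
        (x ++ (b, false, t) :: (a, false, s) :: (m ++ y)) :=
      ⟨x, m ++ y, a, b, s, t, by simp, rfl⟩
    have rest := ih (x ++ [(b, false, t)]) y a s (fun e he => h e (by simp [he]))
    refine Relation.ReflTransGen.head step ?_
    simpa [List.append_assoc] using rest

lemma swap_chain_left (m : GWord) : ∀ (x y : GWord) (a : ℕ) (s : Bool),
    (∀ e ∈ m, e.2.1 = false) →
    Relation.ReflTransGen WRaw (x ++ m ++ (a, false, s) :: y)
      (x ++ (a, false, s) :: (m ++ y)) := by
  induction m with
  | nil => intro x y a s _; simpa using Relation.ReflTransGen.refl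
  | cons e m ih =>
    intro x y a s h
    obtain ⟨b, tb, t⟩ := e
    have htb : tb = false := h (b, tb, t) (by simp)
    subst htb
    have rest := ih (x ++ [(b, false, t)]) y a s (fun e he => h e (by simp [he]))
    have step : WRaw (x ++ (b, false, t) :: (a, false, s) :: (m ++ y))
        (x ++ (a, false, s) :: ((b, false, t) :: (m ++ y))) :=
      ⟨x, m ++ y, b, a, t, s, rfl, rfl⟩
    refine Relation.ReflTransGen.trans ?_ (Relation.ReflTransGen.single step)
    simpa [List.append_assoc] using rest

lemma reduce_TF (v : GWord) (hG : IsGaussCode v) (hTF : TFs v) (hne : v ≠ []) :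
    ∃ v', Relation.ReflTransGen CWStep v v' ∧ IsGaussCode v' ∧ TFs v' ∧
      v'.length < v.length := by
  obtain ⟨e, he⟩ := List.exists_mem_of_ne_nil v hne
  obtain ⟨-, s₁, -, hh1⟩ := hG e.1 ⟨e, he, rfl⟩
  obtain ⟨X, a, s, Y, hvdec, hXt⟩ := first_head v ⟨_, hh1, rfl⟩
  have hhav : ((a : ℕ), true, s) ∈ v := by rw [hvdec]; simp
  have hta : ((a : ℕ), false, s) ∈ v := mem_tail_of_mem_head hG hhav
  have htaX : ((a : ℕ), false, s) ∈ X := by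
    rw [hvdec] at hta
    rcases List.mem_append.mp hta with h | h
    · exact h
    · rcases List.mem_cons.mp h with h | h
      · exact absurd h (by simp)
      · exfalso
        obtain ⟨y2, z2, hY⟩ := List.append_of_mem h
        exact hTF a s s (pair_sublist_of_decomp (by rw [hvdec, hY]))
  obtain ⟨X1, M, hX⟩ := List.append_of_mem htaX
  have hMt : ∀ e ∈ M, e.2.1 = false := fun e heM => hXt e (by rw [hX]; simp [heM])
  have hvdec2 : v = X1 ++ (a, false, s) :: (M ++ (a, true, s) :: Y) := by
    rw [hvdec, hX]; simp
  have hno := no_other hG hvdec2 rfl rfl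
  refine ⟨X1 ++ M ++ Y, ?_, delete_gauss hG hvdec2 rfl rfl,
    hTF.mono (by rw [hvdec2]; exact del_sublist X1 M Y _ _),
    by rw [hvdec2]; simp only [List.length_append, List.length_cons]; omega⟩
  have c1 : Relation.ReflTransGen WRaw v
      (X1 ++ M ++ (a, false, s) :: ((a, true, s) :: Y)) := by
    rw [hvdec2]
    exact swap_chain M X1 ((a, true, s) :: Y) a s hMt
  have c2 : CWStep (X1 ++ M ++ (a, false, s) :: ((a, true, s) :: Y))
      (X1 ++ M ++ Y) := by
    refine c1step ⟨X1 ++ M, Y, a, false, s, ?_, by simp, by simp⟩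
    intro e he
    apply hno
    rcases List.mem_append.mp he with h | h
    · simpa [List.mem_append] using (List.mem_append.mp h).elim Or.inl (Or.inr ∘ Or.inl)
    · simp [List.mem_append, h]
  exact (Relation.ReflTransGen.mono (p := CWStep) (fun _ _ h => wstep h) _ _ c1).tail c2

lemma reduce_HF (v : GWord) (hG : IsGaussCode v) (hHF : HFs v) (hne : v ≠ []) :
    ∃ v', Relation.ReflTransGen CWStep v v' ∧ IsGaussCode v' ∧ HFs v' ∧
      v'.length < v.length := by
  obtain ⟨e, he⟩ := List.exists_mem_of_ne_nil v hne
  obtain ⟨-, s₁, -, hh1⟩ := hG e.1 ⟨e, he, rfl⟩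
  have hex : ∃ e' ∈ v.reverse, e'.2.1 = true := ⟨_, List.mem_reverse.mpr hh1, rfl⟩
  obtain ⟨X, a, s, Y, hrd, hXt⟩ := first_head v.reverse hex
  have hvdec : v = Y.reverse ++ (a, true, s) :: X.reverse := by
    have h := congrArg List.reverse hrd
    rw [List.reverse_reverse] at h
    rw [h]; simp
  have hBt : ∀ e ∈ X.reverse, e.2.1 = false := fun e h => hXt e (List.mem_reverse.mp h)
  have hhav : ((a : ℕ), true, s) ∈ v := by rw [hvdec]; simp
  have hta : ((a : ℕ), false, s) ∈ v := mem_tail_of_mem_head hG hhav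
  have htaB : ((a : ℕ), false, s) ∈ X.reverse := by
    rw [hvdec] at hta
    rcases List.mem_append.mp hta with h | h
    · exfalso
      obtain ⟨y2, z2, hY⟩ := List.append_of_mem h
      refine hHF a s s (pair_sublist_of_decomp (x := y2) (y := z2)
        (z := X.reverse) (e1 := ((a : ℕ), false, s)) (e2 := ((a : ℕ), true, s)) ?_)
      rw [hvdec, hY]; simp
    · rcases List.mem_cons.mp h with h | h
      · exact absurd h (by simp)
      · exact h
  obtain ⟨M, Z, hB⟩ := List.append_of_mem htaB
  have hMt : ∀ e ∈ M, e.2.1 = false := fun e heM => hBt e (by rw [hB]; simp [heM])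
  have hvdec2 : v = Y.reverse ++ (a, true, s) :: (M ++ (a, false, s) :: Z) := by
    rw [hvdec, hB]
  have hno := no_other hG hvdec2 rfl rfl
  refine ⟨Y.reverse ++ M ++ Z, ?_, delete_gauss hG hvdec2 rfl rfl,
    hHF.mono (by rw [hvdec2]; exact del_sublist Y.reverse M Z _ _),
    by rw [hvdec2]; simp only [List.length_append, List.length_cons]; omega⟩
  have c1 : Relation.ReflTransGen WRaw v
      (Y.reverse ++ (a, true, s) :: ((a, false, s) :: (M ++ Z))) := by
    rw [hvdec2]
    have := swap_chain_left M (Y.reverse ++ [(a, true, s)]) Z a s hMt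
    simpa [List.append_assoc] using this
  have c2 : CWStep (Y.reverse ++ (a, true, s) :: ((a, false, s) :: (M ++ Z)))
      (Y.reverse ++ M ++ Z) := by
    refine c1step ⟨Y.reverse, M ++ Z, a, true, s, ?_, by simp, by simp⟩
    intro e he
    apply hno
    rcases List.mem_append.mp he with h | h
    · simp [List.mem_append, h]
    · rcases List.mem_append.mp h with h | h
      · simp [List.mem_append, h]
      · simp [List.mem_append, h]
  exact (Relation.ReflTransGen.mono (p := CWStep) (fun _ _ h => wstep h) _ _ c1).tail c2

lemma chain_TF : ∀ (N : ℕ) (v : GWord), v.length ≤ N → IsGaussCode v → TFs v →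
    Relation.ReflTransGen CWStep v [] := by
  intro N
  induction N with
  | zero =>
    intro v hv _ _
    rw [List.length_eq_zero_iff.mp (Nat.le_zero.mp hv)]
  | succ N ih =>
    intro v hv hG hTF
    by_cases hne : v = []
    · rw [hne]
    · obtain ⟨v', hchain, hG', hTF', hlt⟩ := reduce_TF v hG hTF hne
      exact hchain.trans (ih v' (by omega) hG' hTF')

lemma chain_HF : ∀ (N : ℕ) (v : GWord), v.length ≤ N → IsGaussCode v → HFs v →
    Relation.ReflTransGen CWStep v [] := by
  intro N
  induction N with
  | zero =>
    intro v hv _ _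
    rw [List.length_eq_zero_iff.mp (Nat.le_zero.mp hv)]
  | succ N ih =>
    intro v hv hG hHF
    by_cases hne : v = []
    · rw [hne]
    · obtain ⟨v', hchain, hG', hHF', hlt⟩ := reduce_HF v hG hHF hne
      exact hchain.trans (ih v' (by omega) hG' hHF')

lemma cwstep_unrotate {w v : GWord} {n : ℕ} (h : CWStep (w.rotate n) v) :
    CWStep w v := by
  obtain ⟨u₀, v₀, ⟨m, f, hf, hu⟩, hv, hmove⟩ := h
  rw [List.rotate_rotate] at hu
  exact ⟨u₀, v₀, ⟨n + m, f, hf, hu⟩, hv, hmove⟩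

lemma unrotate {D : GWord} {n : ℕ}
    (h : Relation.ReflTransGen CWStep (D.rotate n) []) :
    Relation.ReflTransGen CWStep D [] := by
  rcases Relation.ReflTransGen.cases_head h with h0 | ⟨c, hstep, hrest⟩
  · have hD : D = [] := by
      have := congrArg List.length h0.symm
      simpa using this.symm
    rw [hD]
  · exact Relation.ReflTransGen.head (cwstep_unrotate hstep) hrest

lemma rtg_eqv {r : GWord → GWord → Prop} {a b : GWord}
    (h : Relation.ReflTransGen r a b) : Relation.EqvGen r a b := by
  induction h with
  | refl => exact Relation.EqvGen.refl _
  | tail _ h2 ih => exact Relation.EqvGen.trans _ _ _ ih (Relation.EqvGen.rel _ _ h2)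

lemma weldedStep_of_cwStep {u v : GWord} (h : CWStep u v) : WeldedStep u v := by
  obtain ⟨u₀, v₀, h1, h2, h3⟩ := h
  exact ⟨u₀, v₀, h1, h2, by tauto⟩

end DescendingAux

/-- Every descending Gauss code can be transformed into the
empty code by a finite sequence of C1 and W moves; in particular, every
descending Gauss code represents the trivial welded knot. -/
theorem descending_unknots_by_C1_W (D : GWord) (hD : IsGaussCode D)
    (hdesc : IsDescending D) :
    CWEquiv D [] ∧ WeldedEquiv D [] := by
  have key : Relation.ReflTransGen CWStep D [] := by
    obtain ⟨n, h | h⟩ := hdesc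
    · have hG' : IsGaussCode (D.rotate n) := gauss_perm (List.rotate_perm D n).symm hD
      exact unrotate (chain_TF _ _ le_rfl hG' (TFs_of_tailsFirst h))
    · have hG' : IsGaussCode (D.rotate n) := gauss_perm (List.rotate_perm D n).symm hD
      exact unrotate (chain_HF _ _ le_rfl hG' (HFs_of_rev h))
  have hcw : CWEquiv D [] := rtg_eqv key
  exact ⟨hcw, Relation.EqvGen.mono (fun a b hab => weldedStep_of_cwStep hab) _ _ hcw⟩
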